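/- arXiv:1609.02484 — 5 statements merged into one kernel-verified Lean document; each statement's English description precedes it below -/
import Mathlib

section
/- Let σ be an m-sign and let f be a binary forest with m roots and n leaves. Then the sign list f(σ) produced by the action of f on σ is an n-sign: it has length n, its first entry is +, and, when n ≥ 2, its second entry is −. (This is part of Proposition 3.2: a forest f together with an m-sign σ determines an n-sign f(σ).) -/
/-- A planar rooted binary tree: a leaf, or a node with two subtrees. -/
inductive PTree : Type
  | leaf : PTree
  | node : PTree → PTree → PTree

/-- The number of leaves of a planar binary tree. -/
def PTree.leaves : PTree → ℕ
  | .leaf => 1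
  | .node l r => l.leaves + r.leaves

/-- The sign list produced by a single tree acting on a single sign `s`:
a leaf just outputs `s`; a node (an elementary caret at the root) turns `s`
into the pair `(s, ¬s)` and then lets the left subtree act on `s` and the
right subtree act on `¬s`.  This realises the action "one elementary caret per
internal vertex, working from the roots upwards". -/
def PTree.act : PTree → Bool → List Bool
  | .leaf, s => [s]
  | .node l r, s => l.act s ++ r.act (!s)

/-- The action of a binary forest (a list of trees, one per root) on a sign
list of the same length: the `i`-th tree acts on the `i`-th sign, by recursion
on the forest. -/
def forestAct : List PTree → List Bool → List Bool
  | t :: f, s :: σ => t.act s ++ forestAct f σ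
  | _, _ => []

lemma PTree.leaves_pos (t : PTree) : 1 ≤ t.leaves := by
  induction t with
  | leaf => simp [PTree.leaves]
  | node l r ih ih' => simp [PTree.leaves]; omega

lemma PTree.act_length (t : PTree) (s : Bool) : (t.act s).length = t.leaves := by
  induction t generalizing s with
  | leaf => rfl
  | node l r ih ih' => simp [PTree.act, PTree.leaves, ih, ih']

lemma PTree.act_head (t : PTree) (s : Bool) : (t.act s)[0]? = some s := by
  induction t generalizing s with
  | leaf => rfl
  | node l r ih ih' =>
    rw [PTree.act, List.getElem?_append_left (by rw [PTree.act_length]; exact l.leaves_pos)]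
    exact ih s

lemma PTree.act_second (t : PTree) (s : Bool) (h : 2 ≤ t.leaves) :
    (t.act s)[1]? = some (!s) := by
  induction t generalizing s with
  | leaf => simp [PTree.leaves] at h
  | node l r ih ih' =>
    rw [PTree.act]
    rcases Nat.lt_or_ge l.leaves 2 with h2 | h2
    · have h1 : l.leaves = 1 := by have := l.leaves_pos; omega
      have : ∃ a, l.act s = [a] := by
        have := l.act_length s
        rw [h1] at this
        exact List.length_eq_one_iff.mp this
      obtain ⟨a, ha⟩ := this
      have has : a = s := by have := l.act_head s; rw [ha] at this; simpa using this
      rw [has] at ha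
      rw [ha]
      simpa using r.act_head (!s)
    · rw [List.getElem?_append_left (by rw [PTree.act_length]; omega)]
      exact ih s h2

lemma forestAct_length (f : List PTree) (σ : List Bool) (h : f.length = σ.length) :
    (forestAct f σ).length = (f.map PTree.leaves).sum := by
  induction f generalizing σ with
  | nil => cases σ <;> simp [forestAct]
  | cons t f ih =>
    cases σ with
    | nil => simp at h
    | cons s σ =>
      simp only [forestAct, List.length_append, List.map_cons, List.sum_cons,
        PTree.act_length]
      rw [ih σ (by simpa using h)]
/-- If `σ` is an `m`-sign (length `m`, first entry `+`, second entry `−` when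
`m ≥ 2`) and `f` is a binary forest with `m` roots and `n` leaves, then `f(σ)`
is an `n`-sign: it has length `n`, its first entry is `+` and, when `n ≥ 2`,
its second entry is `−`. -/
theorem forestAct_isSign (m n : ℕ) (hm : 1 ≤ m) (f : List PTree) (σ : List Bool)
    (hf : f.length = m) (hn : (f.map PTree.leaves).sum = n)
    (hσ : σ.length = m) (hσ1 : σ[0]? = some true)
    (hσ2 : 2 ≤ m → σ[1]? = some false) :
    (forestAct f σ).length = n ∧ (forestAct f σ)[0]? = some true ∧
      (2 ≤ n → (forestAct f σ)[1]? = some false) := by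
  match f, σ with
  | [], _ => simp at hf; omega
  | t :: f, [] => simp at hσ; omega
  | t :: f, s :: σ =>
    have hs : s = true := by simpa using hσ1
    subst hs
    have hlen : (forestAct (t :: f) (true :: σ)).length = n := by
      rw [forestAct_length _ _ (by simp only [List.length_cons] at hf hσ ⊢; omega), hn]
    refine ⟨hlen, ?_, ?_⟩
    · rw [forestAct, List.getElem?_append_left (by rw [PTree.act_length]; exact t.leaves_pos)]
      exact t.act_head true
    · intro h2
      rcases Nat.lt_or_ge t.leaves 2 with hl | hl
      · have h1 : t.leaves = 1 := by have := t.leaves_pos; omega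
        have ha : t.act true = [true] := by
          have hlen1 := t.act_length true
          rw [h1] at hlen1
          obtain ⟨a, ha⟩ := List.length_eq_one_iff.mp hlen1
          have : a = true := by have := t.act_head true; rw [ha] at this; simpa using this
          rw [ha, this]
        rw [forestAct, ha]
        have hne : f ≠ [] := by
          intro hfe
          subst hfe
          simp only [forestAct] at hlen
          rw [ha] at hlen
          simp at hlen
          omega
        match f, σ with
        | [], _ => exact absurd rfl hne
        | t' :: f', [] => simp at hσ hf; omega
        | t' :: f', s' :: σ' =>
          have hm2 : 2 ≤ m := by simp at hf; omega
          have hs' : s' = false := by simpa using hσ2 hm2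
          subst hs'
          show (true :: (forestAct (t' :: f') (false :: σ')))[1]? = some false
          simp only [List.getElem?_cons_succ]
          rw [forestAct, List.getElem?_append_left (by rw [PTree.act_length]; exact t'.leaves_pos)]
          exact t'.act_head false
      · rw [forestAct, List.getElem?_append_left (by rw [PTree.act_length]; omega)]
        simpa using t.act_second true hl
end

section
/- (Functoriality of the sign action, Proposition 3.4.) Let g be a binary forest with m roots and n leaves, let f be a binary forest with n roots, and let σ be a sign list of length m. Then f(g(σ)) = (f∘g)(σ), where f∘g is the composite forest obtained by stacking f on top of g. -/
/-- Graft the trees of a forest `f` onto the leaves of a tree `t`, from left to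
right; returns the grafted tree together with the unused remainder of `f`. -/
def PTree.graft : PTree → List PTree → PTree × List PTree
  | .leaf, t :: f => (t, f)
  | .leaf, [] => (.leaf, [])
  | .node l r, f =>
      let (l', f') := l.graft f
      let (r', f'') := r.graft f'
      (.node l' r', f'')

/-- The composite forest `f ∘ g` obtained by stacking the forest `f` on top of
the forest `g`, i.e. grafting the `i`-th tree of `f` onto the `i`-th leaf
of `g`. -/
def forestComp (f g : List PTree) : List PTree :=
  match g with
  | [] => []
  | t :: g' =>
      let (t', f') := t.graft f
      t' :: forestComp f' g'

theorem graft_snd_length (t : PTree) (f : List PTree) (h : t.leaves ≤ f.length) :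
    (t.graft f).2.length = f.length - t.leaves := by
  induction t generalizing f with
  | leaf =>
    cases f with
    | nil => simp [PTree.leaves] at h
    | cons a f' => simp [PTree.graft, PTree.leaves]
  | node l r ihl ihr =>
    simp only [PTree.leaves] at h ⊢
    have hl : l.leaves ≤ f.length := by omega
    have h1 := ihl f hl
    have hr : r.leaves ≤ (l.graft f).2.length := by omega
    have h2 := ihr _ hr
    simp only [PTree.graft]
    omega

theorem key (t : PTree) (f : List PTree) (s : Bool) (τ : List Bool)
    (h : t.leaves ≤ f.length) :
    forestAct f (t.act s ++ τ) =
      (t.graft f).1.act s ++ forestAct (t.graft f).2 τ := by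
  induction t generalizing f s τ with
  | leaf =>
    cases f with
    | nil => simp [PTree.leaves] at h
    | cons a f' => simp [PTree.act, PTree.graft, forestAct]
  | node l r ihl ihr =>
    simp only [PTree.leaves] at h
    have hl : l.leaves ≤ f.length := by omega
    have hr : r.leaves ≤ (l.graft f).2.length := by
      rw [graft_snd_length l f hl]; omega
    simp only [PTree.act, PTree.graft, List.append_assoc]
    rw [ihl f s _ hl, ihr _ (!s) τ hr]

theorem forestAct_comp_aux (g f : List PTree) (σ : List Bool)
    (hf : f.length = (g.map PTree.leaves).sum) (hσ : σ.length = g.length) :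
    forestAct f (forestAct g σ) = forestAct (forestComp f g) σ := by
  induction g generalizing f σ with
  | nil =>
    cases σ with
    | nil => simp [forestAct, forestComp]
    | cons s σ' => simp at hσ
  | cons t g' ih =>
    cases σ with
    | nil => simp at hσ
    | cons s σ' =>
      have hle : t.leaves ≤ f.length := by
        simp [List.map_cons, List.sum_cons] at hf; omega
      simp only [forestAct, forestComp]
      rw [key t f s _ hle]
      have hlen := graft_snd_length t f hle
      have hσ' : σ'.length = g'.length := by simpa using hσ
      rw [ih (t.graft f).2 σ' (by
        simp [List.map_cons, List.sum_cons] at hf ⊢; omega) hσ']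

/-- Functoriality of the sign action: `f(g(σ)) = (f ∘ g)(σ)` whenever `g` has
`m` roots and `n` leaves, `f` has `n` roots, and `σ` has length `m`. -/
theorem forestAct_comp (m n : ℕ) (g f : List PTree) (σ : List Bool)
    (hg : g.length = m) (hgl : (g.map PTree.leaves).sum = n)
    (hf : f.length = n) (hσ : σ.length = m) :
    forestAct f (forestAct g σ) = forestAct (forestComp f g) σ := by
  exact forestAct_comp_aux g f σ (hgl ▸ hf) (hσ.trans hg.symm)
end

section
/- (Unit property of the oriented forest category, part of Proposition 3.6.) For every n-sign σ there exists a planar rooted binary tree T with n leaves such that T(σ₀) = σ, where σ₀ = (+) is the unique 1-sign and T(σ₀) denotes the action of the forest consisting of the single tree T on σ₀. -/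
lemma PTree.length_act (T : PTree) (s : Bool) : (T.act s).length = T.leaves := by
  induction T generalizing s with
  | leaf => rfl
  | node l r ihl ihr => simp [PTree.act, PTree.leaves, ihl, ihr]

lemma swap_run (b : Bool) : ∀ (t1 : List Bool), (∀ x ∈ t1, x = b) → ∀ d : List Bool,
    t1 ++ b :: d = b :: (t1 ++ d) := by
  intro t1 h d
  induction t1 with
  | nil => rfl
  | cons x t ih =>
    have hx : x = b := h x (by simp)
    simp only [List.cons_append, hx, List.cons.injEq, true_and]
    exact ih (fun y hy => h y (by simp [hy])) 

lemma key_s3 : ∀ (N : ℕ) (s : Bool) (l : List Bool), l.length ≤ N →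
    (∃ t, l = s :: t ∧ ∀ y u, t = y :: u → y = !s) →
    ∃ T : PTree, T.act s = l := by
  intro N
  induction N with
  | zero => rintro s l hl ⟨t, rfl, _⟩; simp at hl
  | succ N ih =>
    rintro s l hl ⟨t, rfl, ht⟩
    match t, ht with
    | [], _ => exact ⟨.leaf, rfl⟩
    | y :: rest, ht =>
      have hy : y = !s := ht y rest rfl
      subst hy
      have hrest : rest.length + 1 ≤ N := by simp at hl; omega
      set t1 := rest.takeWhile (· == !s) with ht1
      set d := rest.dropWhile (· == !s) with hd
      have ht1len : t1.length ≤ rest.length := (List.takeWhile_prefix _).length_le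
      have hdlen : d.length ≤ rest.length := (List.dropWhile_suffix _).length_le
      have ht1mem : ∀ x ∈ t1, x = !s := by
        intro x hx
        have := List.mem_takeWhile_imp (ht1 ▸ hx)
        simpa using this
      obtain ⟨TA, hTA⟩ : ∃ T : PTree, T.act s = s :: t1 := by
        apply ih s
        · simp; omega
        · exact ⟨t1, rfl, fun y u hyu => ht1mem y (by simp [hyu])⟩
      obtain ⟨TB, hTB⟩ : ∃ T : PTree, T.act (!s) = (!s) :: d := by
        apply ih (!s)
        · simp; omega
        · refine ⟨d, rfl, fun y u hyu => ?_⟩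
          have : ¬ (y == !s) := by
            have := List.head?_dropWhile_not (· == !s) rest
            rw [← hd, hyu] at this
            simpa using this
          simpa using this
      refine ⟨.node TA TB, ?_⟩
      rw [PTree.act, hTA, hTB]
      have hsplit : t1 ++ d = rest := by rw [ht1, hd]; exact List.takeWhile_append_dropWhile
      calc (s :: t1) ++ ((!s) :: d) = s :: (t1 ++ (!s) :: d) := by simp
        _ = s :: (!s) :: (t1 ++ d) := by rw [swap_run (!s) t1 ht1mem d]
        _ = s :: (!s) :: rest := by rw [hsplit]

/-- Unit property: every `n`-sign `σ` (a sign list of length `n ≥ 1` whose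
first entry is `+` and whose second entry, when `n ≥ 2`, is `−`) is of the
form `T(σ₀)` for some binary tree `T` with `n` leaves, where `σ₀ = (+)` is the
unique `1`-sign. -/
theorem exists_tree_of_sign (n : ℕ) (hn : 1 ≤ n) (σ : List Bool)
    (hσ : σ.length = n) (hσ1 : σ[0]? = some true)
    (hσ2 : 2 ≤ n → σ[1]? = some false) :
    ∃ T : PTree, T.leaves = n ∧ forestAct [T] [true] = σ := by
  obtain ⟨t, rfl⟩ : ∃ t, σ = true :: t := by
    match σ, hσ1 with
    | b :: t, h => exact ⟨t, by simpa using h.symm⟩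
  obtain ⟨T, hT⟩ : ∃ T : PTree, T.act true = true :: t := by
    apply key_s3 (true :: t).length true _ le_rfl
    refine ⟨t, rfl, fun y u hyu => ?_⟩
    subst hyu
    have h2 : 2 ≤ n := by rw [← hσ]; simp
    simpa using hσ2 h2
  refine ⟨T, ?_, ?_⟩
  · rw [← PTree.length_act T true, hT, hσ]
  · show T.act true ++ forestAct [] [] = true :: t
    simpa [forestAct] using hT
end

section
/- (Stabilisation property of the forest category, part of Proposition 3.6.) For any two planar rooted binary trees S and T there exist binary forests p and q, with p having as many roots as S has leaves and q having as many roots as T has leaves, such that the composite trees p∘S and q∘T are equal. In other words, any two binary trees admit a common refinement obtained by grafting forests onto their leaves. -/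
/-- Depth of a tree. -/
def PTree.depth : PTree → ℕ
  | .leaf => 0
  | .node l r => max l.depth r.depth + 1

/-- Full binary tree of depth n. -/
def PTree.full : ℕ → PTree
  | 0 => .leaf
  | n + 1 => PTree.node (PTree.full n) (PTree.full n)

/-- Forest refining t to a full tree of depth n. -/
def PTree.refine : PTree → ℕ → List PTree
  | .leaf, n => [.full n]
  | .node _ _, 0 => []
  | .node l r, n + 1 => l.refine n ++ r.refine n

theorem PTree.refine_length (t : PTree) (n : ℕ) (h : t.depth ≤ n) :
    (t.refine n).length = t.leaves := by
  induction t generalizing n with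
  | leaf => rfl
  | node l r ihl ihr =>
    cases n with
    | zero => simp [PTree.depth] at h
    | succ n =>
      simp only [PTree.depth, Nat.add_le_add_iff_right, max_le_iff] at h
      simp [PTree.refine, PTree.leaves, ihl n h.1, ihr n h.2]

theorem PTree.graft_refine (t : PTree) (n : ℕ) (h : t.depth ≤ n)
    (rest : List PTree) :
    t.graft (t.refine n ++ rest) = (.full n, rest) := by
  induction t generalizing n rest with
  | leaf => rfl
  | node l r ihl ihr =>
    cases n with
    | zero => simp [PTree.depth] at h
    | succ n =>
      simp only [PTree.depth, Nat.add_le_add_iff_right, max_le_iff] at h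
      simp [PTree.refine, PTree.graft, List.append_assoc,
        ihl n h.1, ihr n h.2, PTree.full]

/-- Stabilisation: any two binary trees `S` and `T` admit a common refinement,
i.e. there are forests `p` (with as many roots as `S` has leaves) and `q`
(with as many roots as `T` has leaves) such that `p ∘ S = q ∘ T`. -/
theorem trees_common_refinement (S T : PTree) :
    ∃ (p q : List PTree), p.length = S.leaves ∧ q.length = T.leaves ∧
      forestComp p [S] = forestComp q [T] := by
  set n := max S.depth T.depth with hn
  refine ⟨S.refine n, T.refine n,
    S.refine_length n (le_max_left _ _), T.refine_length n (le_max_right _ _), ?_⟩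
  have hS := S.graft_refine n (le_max_left _ _) []
  have hT := T.graft_refine n (le_max_right _ _) []
  simp only [List.append_nil] at hS hT
  simp [forestComp, hS, hT]
end

section
/- (Stabilisation in the oriented forest category, part of Proposition 3.6.) For any two planar rooted binary trees S and T there exist binary forests p and q, with p having as many roots as S has leaves and q having as many roots as T has leaves, such that p∘S = q∘T as trees and, moreover, the induced signs agree: p(S(σ₀)) = q(T(σ₀)), where σ₀ = (+) is the unique 1-sign. -/
/-- The canonical common refinement of two trees. -/
def PTree.merge : PTree → PTree → PTree
  | .leaf, t => t
  | .node a b, .leaf => .node a b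
  | .node a b, .node c d => .node (a.merge c) (b.merge d)

/-- The residual forest: the subtrees of `merge s t` sitting above the leaves of `s`. -/
def PTree.res : PTree → PTree → List PTree
  | .leaf, t => [t]
  | .node a b, .leaf => List.replicate (a.leaves + b.leaves) .leaf
  | .node a b, .node c d => a.res c ++ b.res d

theorem PTree.merge_comm : ∀ s t : PTree, s.merge t = t.merge s
  | .leaf, .leaf => rfl
  | .leaf, .node _ _ => rfl
  | .node _ _, .leaf => rfl
  | .node a b, .node c d => by
      simp [PTree.merge, merge_comm a c, merge_comm b d]

theorem PTree.res_length : ∀ s t : PTree, (s.res t).length = s.leaves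
  | .leaf, _ => rfl
  | .node a b, .leaf => by simp [PTree.res, PTree.leaves]
  | .node a b, .node c d => by
      simp [PTree.res, PTree.leaves, res_length a c, res_length b d]

theorem PTree.graft_replicate : ∀ (s : PTree) (rest : List PTree),
    s.graft (List.replicate s.leaves .leaf ++ rest) = (s, rest)
  | .leaf, rest => by simp [PTree.leaves, PTree.graft]
  | .node a b, rest => by
      rw [PTree.leaves, List.replicate_add, List.append_assoc]
      simp [PTree.graft, graft_replicate a, graft_replicate b]

theorem PTree.graft_res : ∀ (s t : PTree) (rest : List PTree),
    s.graft (s.res t ++ rest) = (s.merge t, rest)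
  | .leaf, t, rest => rfl
  | .node a b, .leaf, rest => by
      rw [PTree.res, PTree.merge, ← PTree.leaves, PTree.graft_replicate]
  | .node a b, .node c d, rest => by
      rw [PTree.res, List.append_assoc]
      simp [PTree.graft, PTree.merge, graft_res a c, graft_res b d]

theorem PTree.act_replicate : ∀ (s : PTree) (b : Bool) (σ : List Bool) (rest : List PTree),
    forestAct (List.replicate s.leaves .leaf ++ rest) (s.act b ++ σ)
      = s.act b ++ forestAct rest σ
  | .leaf, b, σ, rest => by simp [PTree.leaves, PTree.act, forestAct]
  | .node a c, b, σ, rest => by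
      rw [PTree.leaves, List.replicate_add, PTree.act, List.append_assoc,
        List.append_assoc, act_replicate a, act_replicate c, List.append_assoc]

theorem PTree.act_res : ∀ (s t : PTree) (b : Bool) (σ : List Bool) (rest : List PTree),
    forestAct (s.res t ++ rest) (s.act b ++ σ)
      = (s.merge t).act b ++ forestAct rest σ
  | .leaf, t, b, σ, rest => by simp [PTree.res, PTree.act, PTree.merge, forestAct]
  | .node a c, .leaf, b, σ, rest => by
      rw [PTree.res, PTree.merge, ← PTree.leaves, PTree.act_replicate]
  | .node a c, .node d e, b, σ, rest => by
      rw [PTree.res, PTree.act, PTree.merge, PTree.act, List.append_assoc,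
        List.append_assoc, List.append_assoc, act_res a d, act_res c e]

/-- Stabilisation in the oriented forest category: any two binary trees `S`
and `T` admit a common refinement `p ∘ S = q ∘ T` whose induced signs agree:
`p(S(σ₀)) = q(T(σ₀))`, where `σ₀ = (+)` is the unique `1`-sign. -/

theorem oriented_common_refinement (S T : PTree) :
    ∃ (p q : List PTree), p.length = S.leaves ∧ q.length = T.leaves ∧
      forestComp p [S] = forestComp q [T] ∧
      forestAct p (forestAct [S] [true]) = forestAct q (forestAct [T] [true]) := by
  refine ⟨S.res T, T.res S, S.res_length T, T.res_length S, ?_, ?_⟩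
  · have h1 := S.graft_res T []
    have h2 := T.graft_res S []
    simp only [List.append_nil] at h1 h2
    simp [forestComp, h1, h2, PTree.merge_comm S T]
  · have h1 := S.act_res T true [] []
    have h2 := T.act_res S true [] []
    simp only [List.append_nil] at h1 h2
    simp [forestAct, h1, h2, PTree.merge_comm S T]
end
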